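/- For m, L > 0 and σ > −m·tanh(mL/2), the quantity D(σ) = (1/2)[ log( 4m² / ( (σ+m)² − e^{−2mL}(σ−m)² ) ) + σ/m − 1 ] is nonnegative, vanishes if and only if σ = m, and tends to +∞ as σ → +∞ and as σ → (−m·tanh(mL/2))⁺. -/

import Mathlib

open Real Filter


/-- The relative entropy between the free-boundary field of mass `m` on `(0,L)` and the
Robin field with boundary parameter `σ`. -/
noncomputable def robinRelEntropy (m L σ : ℝ) : ℝ :=
  (1 / 2) * (Real.log (4 * m ^ 2 /
      ((σ + m) ^ 2 - Real.exp (-2 * m * L) * (σ - m) ^ 2)) + σ / m - 1)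

lemma aux_tanh_mul (x : ℝ) :
    Real.tanh x * (1 + Real.exp (-(2 * x))) = 1 - Real.exp (-(2 * x)) := by
  have hc : Real.cosh x ≠ 0 := (Real.cosh_pos x).ne'
  have hce : Real.exp (-x) = Real.cosh x - Real.sinh x := (Real.cosh_sub_sinh x).symm
  have h1 : Real.exp (-(2 * x)) = Real.exp (-x) * Real.exp (-x) := by
    rw [← Real.exp_add]; ring_nf
  have h3 : Real.cosh x ^ 2 - Real.sinh x ^ 2 = 1 := Real.cosh_sq_sub_sinh_sq x
  rw [Real.tanh_eq_sinh_div_cosh, div_mul_eq_mul_div, div_eq_iff hc, h1, hce]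
  linear_combination (Real.cosh x - Real.sinh x) * h3

lemma aux_log_le (y c : ℝ) (hy : 0 < y) (hc : 0 < c) :
    Real.log y ≤ y / c - 1 + Real.log c := by
  have h := Real.add_one_le_exp (Real.log y - Real.log c)
  rw [Real.exp_sub, Real.exp_log hy, Real.exp_log hc] at h
  linarith

set_option maxHeartbeats 1000000 in
/-- `D(σ)` is nonnegative on `σ > -m tanh(mL/2)`, vanishes iff `σ = m`, tends to `+∞`
as `σ → +∞`, and tends to `+∞` as `σ → (-m tanh(mL/2))⁺`. -/
theorem robinRelEntropy_properties (m L : ℝ) (hm : 0 < m) (hL : 0 < L) :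
    (∀ σ : ℝ, -m * Real.tanh (m * L / 2) < σ →
        0 ≤ robinRelEntropy m L σ ∧ (robinRelEntropy m L σ = 0 ↔ σ = m)) ∧
      Tendsto (robinRelEntropy m L) atTop atTop ∧
      Tendsto (robinRelEntropy m L)
        (nhdsWithin (-m * Real.tanh (m * L / 2))
          (Set.Ioi (-m * Real.tanh (m * L / 2)))) atTop := by
  set E : ℝ := Real.exp (-(m * L)) with hE
  set T : ℝ := Real.tanh (m * L / 2) with hTdef
  set t : ℝ := -m * T with htdef
  have hE0 : 0 < E := Real.exp_pos _
  have hE1 : E < 1 := by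
    rw [hE, Real.exp_lt_one_iff]; nlinarith
  have hT : T * (1 + E) = 1 - E := by
    have h := aux_tanh_mul (m * L / 2)
    rw [show -(2 * (m * L / 2)) = -(m * L) by ring] at h
    exact h
  have hT0 : 0 < T := by nlinarith
  have hT1 : T < 1 := by nlinarith
  have hE2 : Real.exp (-2 * m * L) = E ^ 2 := by
    rw [hE, sq, ← Real.exp_add]; ring_nf
  have hta : t * (1 + E) = -(m * (1 - E)) := by
    rw [htdef]; linear_combination (-m) * hT
  have htb : t * (1 - E) = -(m * (T * (1 - E))) := by
    rw [htdef]; ring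
  have hTE : T * (1 - E) < 1 + E := by nlinarith
  -- the quadratic and its factorization
  have hQfact : ∀ σ : ℝ, (σ + m) ^ 2 - Real.exp (-2 * m * L) * (σ - m) ^ 2 =
      (σ * (1 - E) + m * (1 + E)) * (σ * (1 + E) + m * (1 - E)) := by
    intro σ; rw [hE2]; ring
  have hQpos : ∀ σ : ℝ, t < σ →
      0 < (σ + m) ^ 2 - Real.exp (-2 * m * L) * (σ - m) ^ 2 := by
    intro σ hσ
    rw [hQfact]
    have h2 : 0 < σ * (1 + E) + m * (1 - E) := by
      nlinarith [mul_lt_mul_of_pos_right hσ (show (0:ℝ) < 1 + E by linarith), hta]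
    have h1 : 0 < σ * (1 - E) + m * (1 + E) := by
      nlinarith [mul_lt_mul_of_pos_right hσ (show (0:ℝ) < 1 - E by linarith), htb,
        hm, hTE]
    exact mul_pos h1 h2
  have htneg : t < 0 := by
    rw [htdef]; nlinarith
  have hmlt : -m < t := by
    rw [htdef]; nlinarith
  -- key exponential bound
  have hkey : ∀ σ : ℝ, -m < σ → (σ + m) ^ 2 ≤ 4 * m ^ 2 * Real.exp (σ / m - 1) := by
    intro σ hσ
    have h1 : (σ / m - 1) / 2 + 1 = (σ + m) / (2 * m) := by
      field_simp; ring
    have h2 : (σ + m) / (2 * m) ≤ Real.exp ((σ / m - 1) / 2) := by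
      rw [← h1]; exact Real.add_one_le_exp _
    have h0 : 0 ≤ (σ + m) / (2 * m) := div_nonneg (by linarith) (by positivity)
    have h3 : ((σ + m) / (2 * m)) ^ 2 ≤ Real.exp ((σ / m - 1) / 2) ^ 2 := by
      nlinarith
    have h4 : Real.exp ((σ / m - 1) / 2) ^ 2 = Real.exp (σ / m - 1) := by
      rw [sq, ← Real.exp_add]; ring_nf
    rw [h4] at h3
    have h5 : (σ + m) ^ 2 / (4 * m ^ 2) ≤ Real.exp (σ / m - 1) := by
      rw [show (σ + m) ^ 2 / (4 * m ^ 2) = ((σ + m) / (2 * m)) ^ 2 by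
        rw [div_pow]; ring_nf]
      exact h3
    have h6 := (div_le_iff₀ (show (0:ℝ) < 4 * m ^ 2 by positivity)).mp h5
    linarith
  refine ⟨?_, ?_, ?_⟩
  · -- nonnegativity and equality case
    intro σ hσ
    have hQ := hQpos σ hσ
    set Q : ℝ := (σ + m) ^ 2 - Real.exp (-2 * m * L) * (σ - m) ^ 2 with hQdef
    have hσm : -m < σ := lt_trans hmlt hσ
    have hQle : Q ≤ (σ + m) ^ 2 := by
      have : 0 ≤ Real.exp (-2 * m * L) * (σ - m) ^ 2 := by positivity
      linarith
    have hQle4 : Q ≤ 4 * m ^ 2 * Real.exp (σ / m - 1) :=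
      le_trans hQle (hkey σ hσm)
    have hexp : Real.exp (1 - σ / m) ≤ 4 * m ^ 2 / Q := by
      rw [le_div_iff₀ hQ]
      calc Real.exp (1 - σ / m) * Q
          ≤ Real.exp (1 - σ / m) * (4 * m ^ 2 * Real.exp (σ / m - 1)) :=
            mul_le_mul_of_nonneg_left hQle4 (Real.exp_pos _).le
        _ = 4 * m ^ 2 * (Real.exp (1 - σ / m) * Real.exp (σ / m - 1)) := by ring
        _ = 4 * m ^ 2 := by
            rw [← Real.exp_add, show 1 - σ / m + (σ / m - 1) = 0 by ring,
              Real.exp_zero, mul_one]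
    have hlog : 1 - σ / m ≤ Real.log (4 * m ^ 2 / Q) := by
      have := Real.log_le_log (Real.exp_pos _) hexp
      rwa [Real.log_exp] at this
    refine ⟨?_, ?_, ?_⟩
    · unfold robinRelEntropy
      rw [← hQdef]
      linarith
    · intro h0
      by_contra hne
      have hp : 0 < Real.exp (-2 * m * L) * (σ - m) ^ 2 := by
        have hne' : σ - m ≠ 0 := sub_ne_zero.mpr hne
        positivity
      have hQlt : Q < 4 * m ^ 2 * Real.exp (σ / m - 1) := by
        have := hkey σ hσm
        linarith [hQdef.le, hQdef.ge]
      have hexp' : Real.exp (1 - σ / m) < 4 * m ^ 2 / Q := by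
        rw [lt_div_iff₀ hQ]
        calc Real.exp (1 - σ / m) * Q
            < Real.exp (1 - σ / m) * (4 * m ^ 2 * Real.exp (σ / m - 1)) :=
              mul_lt_mul_of_pos_left hQlt (Real.exp_pos _)
          _ = 4 * m ^ 2 * (Real.exp (1 - σ / m) * Real.exp (σ / m - 1)) := by ring
          _ = 4 * m ^ 2 := by
              rw [← Real.exp_add, show 1 - σ / m + (σ / m - 1) = 0 by ring,
                Real.exp_zero, mul_one]
      have hlog' : 1 - σ / m < Real.log (4 * m ^ 2 / Q) := by
        have := Real.log_lt_log (Real.exp_pos _) hexp'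
        rwa [Real.log_exp] at this
      unfold robinRelEntropy at h0
      rw [← hQdef] at h0
      linarith
    · intro h
      unfold robinRelEntropy
      rw [h]
      have h1 : (m + m) ^ 2 - Real.exp (-2 * m * L) * (m - m) ^ 2 = 4 * m ^ 2 := by
        ring
      rw [h1, div_self (show (4 * m ^ 2 : ℝ) ≠ 0 by positivity), Real.log_one,
        div_self hm.ne']
      norm_num
  · -- tendsto atTop
    have hC : Tendsto (fun σ : ℝ => (1 / 2) * (σ / (2 * m) +
        (Real.log (4 * m ^ 2) + 1 / 2 - 2 * Real.log (4 * m)))) atTop atTop := by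
      apply Tendsto.const_mul_atTop one_half_pos
      apply tendsto_atTop_add_const_right
      exact Tendsto.atTop_div_const (by positivity) tendsto_id
    apply tendsto_atTop_mono' atTop _ hC
    filter_upwards [eventually_ge_atTop m] with σ hσ
    have hσt : t < σ := lt_of_lt_of_le (lt_of_lt_of_le htneg hm.le) hσ
    have hQ := hQpos σ hσt
    set Q : ℝ := (σ + m) ^ 2 - Real.exp (-2 * m * L) * (σ - m) ^ 2 with hQdef
    have hσm : 0 < σ + m := by linarith
    have hlogdiv : Real.log (4 * m ^ 2 / Q) = Real.log (4 * m ^ 2) - Real.log Q :=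
      Real.log_div (by positivity) hQ.ne'
    have hQle : Q ≤ (σ + m) ^ 2 := by
      have : 0 ≤ Real.exp (-2 * m * L) * (σ - m) ^ 2 := by positivity
      linarith
    have h1 : Real.log Q ≤ 2 * Real.log (σ + m) := by
      have h := Real.log_le_log hQ hQle
      rw [Real.log_pow] at h
      push_cast at h
      linarith
    have h2 : Real.log (σ + m) ≤ (σ + m) / (4 * m) - 1 + Real.log (4 * m) :=
      aux_log_le _ _ hσm (by positivity)
    show (1 / 2) * (σ / (2 * m) + (Real.log (4 * m ^ 2) + 1 / 2
        - 2 * Real.log (4 * m))) ≤ robinRelEntropy m L σ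
    unfold robinRelEntropy
    rw [← hQdef, hlogdiv]
    have h3 : (σ + m) / (4 * m) = σ / (4 * m) + 1 / 4 := by
      field_simp
    have h4 : σ / m = σ / (4 * m) * 4 := by
      field_simp
    have h5 : σ / (2 * m) = σ / (4 * m) * 2 := by
      field_simp; ring
    rw [h3] at h2
    nlinarith [h1, h2, h4, h5]
  · -- boundary limit
    have hQt : (t + m) ^ 2 - Real.exp (-2 * m * L) * (t - m) ^ 2 = 0 := by
      rw [hQfact]
      have h0 : t * (1 + E) + m * (1 - E) = 0 := by linarith [hta]
      rw [h0, mul_zero]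
    have hQcont : Continuous (fun σ : ℝ =>
        (σ + m) ^ 2 - Real.exp (-2 * m * L) * (σ - m) ^ 2) := by
      apply Continuous.sub
      · exact (continuous_id.add continuous_const).pow 2
      · exact continuous_const.mul ((continuous_id.sub continuous_const).pow 2)
    set Q : ℝ → ℝ := fun σ => (σ + m) ^ 2 - Real.exp (-2 * m * L) * (σ - m) ^ 2
      with hQdef
    have hQtend : Tendsto Q (nhdsWithin t (Set.Ioi t)) (nhdsWithin 0 (Set.Ioi 0)) := by
      apply tendsto_nhdsWithin_of_tendsto_nhds_of_eventually_within
      · have h : Tendsto Q (nhds t) (nhds (Q t)) := hQcont.tendsto t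
        rw [show Q t = 0 from hQt] at h
        exact h.mono_left nhdsWithin_le_nhds
      · filter_upwards [self_mem_nhdsWithin] with σ hσ
        exact hQpos σ hσ
    have hlogQ : Tendsto (fun σ => Real.log (Q σ)) (nhdsWithin t (Set.Ioi t)) atBot :=
      Real.tendsto_log_nhdsGT_zero.comp hQtend
    have hneg : Tendsto (fun σ => -Real.log (Q σ)) (nhdsWithin t (Set.Ioi t)) atTop :=
      tendsto_neg_atBot_atTop.comp hlogQ
    have hbig : Tendsto (fun σ => Real.log (4 * m ^ 2) + -Real.log (Q σ))
        (nhdsWithin t (Set.Ioi t)) atTop := tendsto_atTop_add_const_left _ _ hneg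
    have hsmall : Tendsto (fun σ : ℝ => σ / m - 1) (nhdsWithin t (Set.Ioi t))
        (nhds (t / m - 1)) := by
      apply Tendsto.mono_left _ nhdsWithin_le_nhds
      exact ((continuous_id.div_const m).sub continuous_const).tendsto t
    have hsum : Tendsto (fun σ => (Real.log (4 * m ^ 2) + -Real.log (Q σ)) +
        (σ / m - 1)) (nhdsWithin t (Set.Ioi t)) atTop := hbig.atTop_add hsmall
    have hmul : Tendsto (fun σ => (1 / 2) * ((Real.log (4 * m ^ 2) + -Real.log (Q σ)) +
        (σ / m - 1))) (nhdsWithin t (Set.Ioi t)) atTop :=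
      Tendsto.const_mul_atTop one_half_pos hsum
    apply hmul.congr'
    filter_upwards [self_mem_nhdsWithin] with σ hσ
    have hQp := hQpos σ hσ
    unfold robinRelEntropy
    rw [show Q σ = (σ + m) ^ 2 - Real.exp (-2 * m * L) * (σ - m) ^ 2 from rfl,
      Real.log_div (by positivity) hQp.ne']
    ring
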